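/- arXiv:1609.08054 — 12 statements merged into one kernel-verified Lean document; each statement's English description precedes it below -/
import Mathlib

section
/- If N₁ and N₂ are second submodules of an R-module M, then N₁ + N₂ is a 2-absorbing second submodule of M. -/
open Pointwise

/-- A proper submodule `L` is completely irreducible if whenever `L` is the
intersection of a family of submodules, it equals one of them. -/
def IsCompletelyIrreducible {R M : Type*} [CommRing R] [AddCommGroup M] [Module R M]
    (L : Submodule R M) : Prop :=
  L ≠ ⊤ ∧ ∀ S : Set (Submodule R M), L = sInf S → L ∈ S

/-- A nonzero submodule `N` is 2-absorbing second if whenever `a b : R`, `L` is a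
completely irreducible submodule, and `a • b • N ⊆ L`, then `a • N ⊆ L` or
`b • N ⊆ L` or `a * b ∈ Ann(N)`. -/
def Is2AbsorbingSecond {R M : Type*} [CommRing R] [AddCommGroup M] [Module R M]
    (N : Submodule R M) : Prop :=
  N ≠ ⊥ ∧ ∀ (a b : R) (L : Submodule R M), IsCompletelyIrreducible L →
    a • b • N ≤ L → a • N ≤ L ∨ b • N ≤ L ∨ a * b ∈ N.annihilator

/-- A nonzero submodule `S` is second if for each `a : R`, multiplication by `a`
on `S` is surjective (`a • S = S`) or zero (`a • S = ⊥`). -/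
def IsSecondSubmodule {R M : Type*} [CommRing R] [AddCommGroup M] [Module R M]
    (S : Submodule R M) : Prop :=
  S ≠ ⊥ ∧ ∀ a : R, a • S = S ∨ a • S = ⊥

lemma ann_of_smul_smul_eq_bot {R M : Type*} [CommRing R] [AddCommGroup M] [Module R M]
    (a b : R) (N : Submodule R M) (h : a • b • N = ⊥) : a * b ∈ N.annihilator := by
  rw [Submodule.mem_annihilator]
  intro n hn
  have hm : (a * b) • n ∈ a • b • N := by
    rw [mul_smul]
    exact Submodule.smul_mem_pointwise_smul _ a _
      (Submodule.smul_mem_pointwise_smul n b N hn)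
  rw [h] at hm
  simpa using hm

theorem sum_of_two_second_is_2absorbing_second
    {R M : Type*} [CommRing R] [AddCommGroup M] [Module R M]
    (N₁ N₂ : Submodule R M) (h₁ : IsSecondSubmodule N₁) (h₂ : IsSecondSubmodule N₂) :
    Is2AbsorbingSecond (N₁ ⊔ N₂) := by
  obtain ⟨hn1, hs1⟩ := h₁
  obtain ⟨hn2, hs2⟩ := h₂
  constructor
  · simp [sup_eq_bot_iff, hn1]
  intro a b L _ hab
  rw [Submodule.smul_sup', Submodule.smul_sup'] at hab
  rcases hs1 a with ha1 | ha1 <;> rcases hs1 b with hb1 | hb1 <;>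
    rcases hs2 a with ha2 | ha2 <;> rcases hs2 b with hb2 | hb2 <;>
    simp only [hb1, hb2, ha1, ha2, Submodule.smul_bot', sup_bot_eq, bot_sup_eq, sup_le_iff,
      bot_le, le_refl, and_true, true_and] at hab <;>
  [ -- 1: s s s s
    exact Or.inl (by rw [Submodule.smul_sup', ha1, ha2]; exact sup_le hab.1 hab.2);
    -- 2: s s s b
    exact Or.inr (Or.inl (by rw [Submodule.smul_sup', hb1, hb2]; simpa using hab));
    -- 3: s s b s
    exact Or.inl (by rw [Submodule.smul_sup', ha1, ha2]; simpa using hab);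
    -- 4: s s b b
    exact Or.inl (by rw [Submodule.smul_sup', ha1, ha2]; simpa using hab);
    -- 5: s b s s
    exact Or.inr (Or.inl (by rw [Submodule.smul_sup', hb1, hb2]; simpa using hab));
    -- 6: s b s b
    exact Or.inr (Or.inl (by rw [Submodule.smul_sup', hb1, hb2]; simp));
    -- 7: s b b s
    exact Or.inr (Or.inr (ann_of_smul_smul_eq_bot a b _
      (by simp [Submodule.smul_sup', hb1, hb2, ha1, ha2, Submodule.smul_bot'])));
    -- 8: s b b b
    exact Or.inr (Or.inl (by rw [Submodule.smul_sup', hb1, hb2]; simp));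
    -- 9: b s s s
    exact Or.inl (by rw [Submodule.smul_sup', ha1, ha2]; simpa using hab);
    -- 10: b s s b
    exact Or.inr (Or.inr (ann_of_smul_smul_eq_bot a b _
      (by simp [Submodule.smul_sup', hb1, hb2, ha1, ha2, Submodule.smul_bot'])));
    -- 11: b s b s
    exact Or.inl (by rw [Submodule.smul_sup', ha1, ha2]; simp);
    -- 12: b s b b
    exact Or.inl (by rw [Submodule.smul_sup', ha1, ha2]; simp);
    -- 13: b b s s
    exact Or.inl (by rw [Submodule.smul_sup', ha1, ha2]; simpa using hab);
    -- 14: b b s b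
    exact Or.inr (Or.inl (by rw [Submodule.smul_sup', hb1, hb2]; simp));
    -- 15: b b b s
    exact Or.inl (by rw [Submodule.smul_sup', ha1, ha2]; simp);
    -- 16: b b b b
    exact Or.inl (by rw [Submodule.smul_sup', ha1, ha2]; simp)]
end

section
/- If N is a secondary submodule of M (i.e., for each a ∈ R, multiplication by a on N is surjective or nilpotent) and the quotient ring R/Ann_R(N) has no nonzero nilpotent elements, then N is a 2-absorbing second submodule of M. -/
open Pointwise

/-- A nonzero submodule `N` is secondary if for each `a : R`, multiplication by `a`
on `N` is surjective or nilpotent. -/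
def IsSecondarySubmodule {R M : Type*} [CommRing R] [AddCommGroup M] [Module R M]
    (N : Submodule R M) : Prop :=
  N ≠ ⊥ ∧ ∀ a : R, a • N = N ∨ ∃ n : ℕ, a ^ n ∈ N.annihilator

theorem secondary_reduced_is_2absorbing_second
    {R M : Type*} [CommRing R] [AddCommGroup M] [Module R M]
    (N : Submodule R M) (h : IsSecondarySubmodule N)
    (hred : ∀ r : R, ∀ n : ℕ, r ^ n ∈ N.annihilator → r ∈ N.annihilator) :
    Is2AbsorbingSecond N := by
  obtain ⟨hN, hsec⟩ := h
  refine ⟨hN, fun a b L _ hab => ?_⟩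
  have key : ∀ c : R, c • N = N ∨ c ∈ N.annihilator := fun c => by
    rcases hsec c with hc | ⟨n, hn⟩
    · exact Or.inl hc
    · exact Or.inr (hred c n hn)
  rcases key a with ha | ha
  · rcases key b with hb | hb
    · left
      rw [hb] at hab
      rw [ha] at hab ⊢
      exact hab
    · exact Or.inr (Or.inr (Ideal.mul_mem_left _ a hb))
  · exact Or.inr (Or.inr (mul_comm a b ▸ Ideal.mul_mem_left _ b ha))
end

section
/- Let N be a 2-absorbing second submodule of M, I an ideal of R, a ∈ R, and L a completely irreducible submodule of M. If I•a•N ⊆ L, then a•N ⊆ L or I•N ⊆ L or I•a ⊆ Ann_R(N). -/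
open Pointwise

theorem ideal_smul_2absorbing_second
    {R M : Type*} [CommRing R] [AddCommGroup M] [Module R M]
    (N : Submodule R M) (hN : Is2AbsorbingSecond N) (I : Ideal R) (a : R)
    (L : Submodule R M) (hL : IsCompletelyIrreducible L) (h : I • a • N ≤ L) :
    a • N ≤ L ∨ I • N ≤ L ∨ ∀ x ∈ I, x * a ∈ N.annihilator := by
  by_cases haN : a • N ≤ L
  · exact Or.inl haN
  by_cases hAnn : ∀ x ∈ I, x * a ∈ N.annihilator
  · exact Or.inr (Or.inr hAnn)
  push_neg at hAnn
  obtain ⟨x, hxI, hxa⟩ := hAnn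
  have key : ∀ b ∈ I, b • N ≤ L ∨ b * a ∈ N.annihilator := by
    intro b hb
    have hba : b • a • N ≤ L := by
      refine le_trans ?_ h
      intro y hy
      rw [← SetLike.mem_coe, Submodule.coe_pointwise_smul] at hy
      obtain ⟨m, hm, rfl⟩ := hy
      exact Submodule.smul_mem_smul hb hm
    rcases hN.2 b a L hL hba with h1 | h2 | h3
    · exact Or.inl h1
    · exact absurd h2 haN
    · exact Or.inr h3
  have hxN : x • N ≤ L := by
    rcases key x hxI with h1 | h2
    · exact h1
    · exact absurd h2 hxa
  refine Or.inr (Or.inl ?_)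
  rw [Submodule.smul_le]
  intro b hb n hn
  rcases key b hb with h1 | h2
  · exact h1 (Submodule.smul_mem_pointwise_smul n b N hn)
  · rcases key (b + x) (I.add_mem hb hxI) with h3 | h4
    · have hb1 : (b + x) • n ∈ L := h3 (Submodule.smul_mem_pointwise_smul n _ N hn)
      have hb2 : x • n ∈ L := hxN (Submodule.smul_mem_pointwise_smul n _ N hn)
      have : b • n = (b + x) • n - x • n := by rw [add_smul]; abel
      rw [this]
      exact L.sub_mem hb1 hb2
    · exfalso
      apply hxa
      have hsub : x * a = (b + x) * a - b * a := by ring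
      rw [hsub]
      exact Submodule.sub_mem _ h4 h2
end

section
/- Let N be a 2-absorbing second submodule of M, I and J ideals of R, and L a completely irreducible submodule of M. If I•J•N ⊆ L, then I•N ⊆ L or J•N ⊆ L or I•J ⊆ Ann_R(N). -/
open Pointwise

theorem ideal_ideal_2absorbing_second
    {R M : Type*} [CommRing R] [AddCommGroup M] [Module R M]
    (N : Submodule R M) (hN : Is2AbsorbingSecond N) (I J : Ideal R)
    (L : Submodule R M) (hL : IsCompletelyIrreducible L) (h : I • J • N ≤ L) :
    I • N ≤ L ∨ J • N ≤ L ∨ I * J ≤ N.annihilator := by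
  by_cases hI : I • N ≤ L
  · exact Or.inl hI
  by_cases hJ : J • N ≤ L
  · exact Or.inr (Or.inl hJ)
  refine Or.inr (Or.inr ?_)
  obtain ⟨hNne, h2⟩ := hN
  have mem_pt : ∀ (a : R) (x : M) (S : Submodule R M),
      x ∈ a • S ↔ ∃ y ∈ S, a • y = x := by
    intro a x S
    rw [← SetLike.mem_coe, Submodule.coe_pointwise_smul, Set.mem_smul_set]; simp
  -- key : for a ∈ I, b ∈ J, (a*b) • N ≤ L
  have key : ∀ a ∈ I, ∀ b ∈ J, (a * b) • N ≤ L := by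
    intro a ha b hb x hx
    obtain ⟨n, hn, rfl⟩ := (mem_pt (a * b) x N).mp hx
    rw [mul_smul]
    exact h (Submodule.smul_mem_smul ha (Submodule.smul_mem_smul hb hn))
  have h2' : ∀ a b : R, (a * b) • N ≤ L →
      a • N ≤ L ∨ b • N ≤ L ∨ a * b ∈ N.annihilator := by
    intro a b hab
    exact h2 a b L hL (by rw [smul_smul]; exact hab)
  -- if a•N ≤ L and (a+a')•N ≤ L then a'•N ≤ L
  have sum_lem : ∀ a a' : R, a • N ≤ L → (a + a') • N ≤ L → a' • N ≤ L := by
    intro a a' h1 hsum x hx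
    obtain ⟨n, hn, rfl⟩ := (mem_pt a' x N).mp hx
    have e : a' • n = (a + a') • n - a • n := by rw [add_smul]; abel
    rw [e]
    exact L.sub_mem (hsum (Submodule.smul_mem_pointwise_smul n _ N hn))
      (h1 (Submodule.smul_mem_pointwise_smul n _ N hn))
  -- pick witnesses
  have ha₁ : ∃ a ∈ I, ¬ (a • N ≤ L) := by
    by_contra hc
    push_neg at hc
    exact hI (Submodule.smul_le.mpr fun r hr n hn =>
      hc r hr (Submodule.smul_mem_pointwise_smul n r N hn))
  have hb₁ : ∃ b ∈ J, ¬ (b • N ≤ L) := by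
    by_contra hc
    push_neg at hc
    exact hJ (Submodule.smul_le.mpr fun r hr n hn =>
      hc r hr (Submodule.smul_mem_pointwise_smul n r N hn))
  obtain ⟨a₁, ha₁I, hA₁⟩ := ha₁
  obtain ⟨b₁, hb₁J, hB₁⟩ := hb₁
  -- one-sided lemma
  have H1 : ∀ a b a' : R, (a * b) • N ≤ L → (a' * b) • N ≤ L →
      ((a + a') * b) • N ≤ L → a • N ≤ L → ¬ (a' • N ≤ L) → ¬ (b • N ≤ L) →
      a * b ∈ N.annihilator := by
    intro a b a' k1 k2 k3 hA hA' hB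
    rcases h2' (a + a') b k3 with hh | hh | hh
    · exact absurd (sum_lem a a' hA hh) hA'
    · exact absurd hh hB
    rcases h2' a' b k2 with hh' | hh' | hh'
    · exact absurd hh' hA'
    · exact absurd hh' hB
    have e : a * b = (a + a') * b - a' * b := by ring
    rw [e]
    exact Ideal.sub_mem _ hh hh'
  -- a₁ * b₁ ∈ Ann
  have hA₁B₁ : a₁ * b₁ ∈ N.annihilator := by
    rcases h2' a₁ b₁ (key a₁ ha₁I b₁ hb₁J) with hh | hh | hh
    · exact absurd hh hA₁
    · exact absurd hh hB₁
    · exact hh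
  refine Ideal.mul_le.mpr fun a ha b hb => ?_
  rcases h2' a b (key a ha b hb) with hA | hB | hab
  · -- a • N ≤ L
    by_cases hB : b • N ≤ L
    · -- both: full expansion
      have h1 : a * b₁ ∈ N.annihilator :=
        H1 a b₁ a₁ (key a ha b₁ hb₁J) (key a₁ ha₁I b₁ hb₁J)
          (key (a + a₁) (I.add_mem ha ha₁I) b₁ hb₁J) hA hA₁ hB₁
      have h2'' : b * a₁ ∈ N.annihilator :=
        H1 b a₁ b₁ (by rw [mul_comm]; exact key a₁ ha₁I b hb)
          (by rw [mul_comm]; exact key a₁ ha₁I b₁ hb₁J)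
          (by rw [mul_comm]; exact key a₁ ha₁I (b + b₁) (J.add_mem hb hb₁J)) hB hB₁ hA₁
      have h3 : (a + a₁) * (b + b₁) ∈ N.annihilator := by
        rcases h2' (a + a₁) (b + b₁)
            (key (a + a₁) (I.add_mem ha ha₁I) (b + b₁) (J.add_mem hb hb₁J)) with hh | hh | hh
        · exact absurd (sum_lem a a₁ hA hh) hA₁
        · exact absurd (sum_lem b b₁ hB hh) hB₁
        · exact hh
      have e : a * b = (a + a₁) * (b + b₁) - a * b₁ - b * a₁ - a₁ * b₁ := by ring
      rw [e]
      exact Ideal.sub_mem _ (Ideal.sub_mem _ (Ideal.sub_mem _ h3 h1) h2'') hA₁B₁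
    · exact H1 a b a₁ (key a ha b hb) (key a₁ ha₁I b hb)
        (key (a + a₁) (I.add_mem ha ha₁I) b hb) hA hA₁ hB
  · -- b • N ≤ L, ¬ a • N ≤ L handled via symmetry
    by_cases hA : a • N ≤ L
    · -- both: same as above
      have h1 : a * b₁ ∈ N.annihilator :=
        H1 a b₁ a₁ (key a ha b₁ hb₁J) (key a₁ ha₁I b₁ hb₁J)
          (key (a + a₁) (I.add_mem ha ha₁I) b₁ hb₁J) hA hA₁ hB₁
      have h2'' : b * a₁ ∈ N.annihilator :=
        H1 b a₁ b₁ (by rw [mul_comm]; exact key a₁ ha₁I b hb)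
          (by rw [mul_comm]; exact key a₁ ha₁I b₁ hb₁J)
          (by rw [mul_comm]; exact key a₁ ha₁I (b + b₁) (J.add_mem hb hb₁J)) hB hB₁ hA₁
      have h3 : (a + a₁) * (b + b₁) ∈ N.annihilator := by
        rcases h2' (a + a₁) (b + b₁)
            (key (a + a₁) (I.add_mem ha ha₁I) (b + b₁) (J.add_mem hb hb₁J)) with hh | hh | hh
        · exact absurd (sum_lem a a₁ hA hh) hA₁
        · exact absurd (sum_lem b b₁ hB hh) hB₁
        · exact hh
      have e : a * b = (a + a₁) * (b + b₁) - a * b₁ - b * a₁ - a₁ * b₁ := by ring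
      rw [e]
      exact Ideal.sub_mem _ (Ideal.sub_mem _ (Ideal.sub_mem _ h3 h1) h2'') hA₁B₁
    · have := H1 b a b₁ (by rw [mul_comm]; exact key a ha b hb)
        (by rw [mul_comm]; exact key a ha b₁ hb₁J)
        (by rw [mul_comm]; exact key a ha (b + b₁) (J.add_mem hb hb₁J)) hB hB₁ hA
      rwa [mul_comm]
  · exact hab
end

section
/- If N is a 2-absorbing second submodule of M and I is an ideal of R with I ⊄ Ann_R(N), then I•N is a 2-absorbing second submodule of M. -/
open Pointwise

private lemma mem_psmul_iff {R M : Type*} [CommRing R] [AddCommGroup M] [Module R M]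
    {a : R} {S : Submodule R M} {x : M} : x ∈ a • S ↔ ∃ n ∈ S, a • n = x := by
  rw [← SetLike.mem_coe, Submodule.coe_pointwise_smul]
  exact Set.mem_smul_set

theorem smul_2absorbing_second
    {R M : Type*} [CommRing R] [AddCommGroup M] [Module R M]
    (N : Submodule R M) (hN : Is2AbsorbingSecond N) (I : Ideal R)
    (hI : ¬ I ≤ N.annihilator) :
    Is2AbsorbingSecond (I • N) := by
  obtain ⟨hNbot, h2⟩ := hN
  have memL : ∀ (r : R) (L' : Submodule R M), r • N ≤ L' ↔ ∀ n ∈ N, r • n ∈ L' := by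
    intro r L'
    constructor
    · intro h n hn
      exact h (Submodule.smul_mem_pointwise_smul n r N hn)
    · intro h x hx
      obtain ⟨n, hn, rfl⟩ := mem_psmul_iff.mp hx
      exact h n hn
  constructor
  · intro hbot
    apply hI
    intro r hr
    rw [Submodule.mem_annihilator]
    intro n hn
    have h1 : r • n ∈ I • N := Submodule.smul_mem_smul hr hn
    rw [hbot] at h1
    simpa using h1
  · intro a b L hL hab
    by_cases hbN : b • N ≤ L
    · right; left
      intro x hx
      obtain ⟨y, hy, rfl⟩ := mem_psmul_iff.mp hx
      exact hbN (Submodule.smul_mem_pointwise_smul y b N (Submodule.smul_le_right hy))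
    · have key : ∀ c ∈ I, ((a*c) • N ≤ L) ∨ (a*b*c ∈ N.annihilator) := by
        intro c hc
        have hsub : (a*c) • b • N ≤ L := by
          intro x hx
          obtain ⟨y, hy, rfl⟩ := mem_psmul_iff.mp hx
          obtain ⟨n, hn, rfl⟩ := mem_psmul_iff.mp hy
          have h1 : c • n ∈ I • N := Submodule.smul_mem_smul hc hn
          have h2' : b • c • n ∈ b • (I • N) := Submodule.smul_mem_pointwise_smul _ b _ h1
          have h3 : a • b • c • n ∈ a • b • (I • N) := Submodule.smul_mem_pointwise_smul _ a _ h2'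
          have h4 := hab h3
          have heq : (a*c) • (b • n) = a • b • c • n := by
            simp only [smul_smul]
            ring_nf
          rw [heq]; exact h4
        rcases h2 (a*c) b L hL hsub with h | h | h
        · left; exact h
        · exact absurd h hbN
        · right; rwa [show a*c*b = a*b*c by ring] at h
      by_contra hcon
      push_neg at hcon
      obtain ⟨hA, _, hC⟩ := hcon
      obtain ⟨c1, hc1I, hc1⟩ : ∃ c ∈ I, ¬ ((a*c) • N ≤ L) := by
        by_contra h
        push_neg at h
        apply hA
        intro x hx
        obtain ⟨y, hy, rfl⟩ := mem_psmul_iff.mp hx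
        refine Submodule.smul_induction_on hy ?_ ?_
        · intro r hr n hn
          have h5 := (memL (a*r) L).mp (h r hr) n hn
          rwa [mul_smul] at h5
        · intro x y hx' hy'
          rw [smul_add]; exact L.add_mem hx' hy'
      obtain ⟨c2, hc2I, hc2⟩ : ∃ c ∈ I, a*b*c ∉ N.annihilator := by
        by_contra h
        push_neg at h
        apply hC
        rw [Submodule.mem_annihilator]
        intro x hx
        refine Submodule.smul_induction_on hx ?_ ?_
        · intro r hr n hn
          have h6 := Submodule.mem_annihilator.mp (h r hr) n hn
          rw [smul_smul]; exact h6
        · intro x y hx' hy'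
          rw [smul_add, hx', hy', add_zero]
      have hQ1 : a*b*c1 ∈ N.annihilator := (key c1 hc1I).resolve_left hc1
      have hP2 : (a*c2) • N ≤ L := by
        rcases key c2 hc2I with h | h
        · exact h
        · exact absurd h hc2
      rcases key (c1+c2) (I.add_mem hc1I hc2I) with h | h
      · apply hc1
        rw [memL]
        intro n hn
        have e : a*c1 = a*(c1+c2) - a*c2 := by ring
        rw [e, sub_smul]
        exact L.sub_mem ((memL _ _).mp h n hn) ((memL _ _).mp hP2 n hn)
      · apply hc2
        have e : a*b*c2 = a*b*(c1+c2) - a*b*c1 := by ring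
        rw [e]
        exact Submodule.sub_mem _ h hQ1
end

section
/- If N is a 2-absorbing second submodule of M and L is a completely irreducible submodule of M with N ⊄ L, then the ideal (L :_R N) = {r ∈ R : r•N ⊆ L} is a 2-absorbing ideal of R. -/
open Pointwise

/-- Witness characterization of completely irreducible. -/
lemma ci_iff_witness {R M : Type*} [CommRing R] [AddCommGroup M] [Module R M]
    (L : Submodule R M) :
    IsCompletelyIrreducible L ↔ L ≠ ⊤ ∧ ∃ m, m ∉ L ∧ ∀ K : Submodule R M, L < K → m ∈ K := by
  constructor
  · rintro ⟨hT, hI⟩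
    refine ⟨hT, ?_⟩
    by_contra h
    push_neg at h
    have hLS : L = sInf {K : Submodule R M | L < K} := by
      apply le_antisymm
      · exact le_sInf fun K hK => le_of_lt hK
      · intro m hm
        by_contra hmL
        obtain ⟨K, hK, hmK⟩ := h m hmL
        exact hmK (Submodule.mem_sInf.mp hm K hK)
    have := hI _ hLS
    exact lt_irrefl L this
  · rintro ⟨hT, m, hmL, hm⟩
    refine ⟨hT, fun S hS => ?_⟩
    by_contra hLS
    have : m ∈ sInf S := by
      apply Submodule.mem_sInf.mpr
      intro K hK
      have hLK : L ≤ K := hS ▸ sInf_le hK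
      exact hm K (lt_of_le_of_ne hLK (fun e => hLS (e ▸ hK)))
    rw [← hS] at this
    exact hmL this

lemma ci_comap_smul {R M : Type*} [CommRing R] [AddCommGroup M] [Module R M]
    (L : Submodule R M) (hL : IsCompletelyIrreducible L) (c : R)
    (hne : L.comap (LinearMap.lsmul R M c) ≠ ⊤) :
    IsCompletelyIrreducible (L.comap (LinearMap.lsmul R M c)) := by
  set Lc := L.comap (LinearMap.lsmul R M c) with hLc
  obtain ⟨hT, m, hmL, hm⟩ := (ci_iff_witness L).mp hL
  -- since Lc ≠ ⊤, ⊤ > Lc, so L < L ⊔ c • ⊤ ... derive m ∈ L ⊔ (c • (⊤:Submodule R M))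
  have hlt : Lc < ⊤ := lt_of_le_of_ne le_top hne
  have hsup : L < L ⊔ (c • (⊤ : Submodule R M)) := by
    rcases lt_iff_le_and_ne.mp hlt with ⟨_, _⟩
    apply lt_of_le_of_ne le_sup_left
    intro he
    apply hne
    rw [eq_top_iff]
    intro x _
    have : c • x ∈ L ⊔ (c • (⊤ : Submodule R M)) :=
      Submodule.mem_sup_right (Submodule.smul_mem_pointwise_smul x c ⊤ trivial)
    rw [← he] at this
    exact this
  have hmsup : m ∈ L ⊔ (c • (⊤ : Submodule R M)) := hm _ hsup
  obtain ⟨l, hl, y, hy, hly⟩ := Submodule.mem_sup.mp hmsup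
  rw [← SetLike.mem_coe, Submodule.coe_pointwise_smul] at hy
  obtain ⟨x, -, hx⟩ := Set.mem_smul_set.mp hy
  -- m = l + c • x
  have hxLc : x ∉ Lc := by
    intro hxm
    apply hmL
    rw [← hly, ← hx]
    exact L.add_mem hl hxm
  apply (ci_iff_witness Lc).mpr
  refine ⟨hne, x, hxLc, fun K hK => ?_⟩
  -- K ⊋ Lc; then L < L ⊔ c • K
  have hsupK : L < L ⊔ (c • K) := by
    apply lt_of_le_of_ne le_sup_left
    intro he
    obtain ⟨k, hkK, hkLc⟩ := Set.exists_of_ssubset hK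
    apply hkLc
    have : c • k ∈ L ⊔ (c • K) :=
      Submodule.mem_sup_right (Submodule.smul_mem_pointwise_smul k c K hkK)
    rw [← he] at this
    exact this
  have hmK : m ∈ L ⊔ (c • K) := hm _ hsupK
  obtain ⟨l', hl', y', hy', hly'⟩ := Submodule.mem_sup.mp hmK
  rw [← SetLike.mem_coe, Submodule.coe_pointwise_smul] at hy'
  obtain ⟨k, hkK, hk⟩ := Set.mem_smul_set.mp hy'
  -- c • (x - k) = (l' - l) ∈ L
  have hsub : x - k ∈ Lc := by
    show c • (x - k) ∈ L
    have : c • x - c • k = l' - l := by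
      rw [hx, hk]
      rw [← hly] at hly'
      exact sub_eq_sub_iff_add_eq_add.mpr (by rw [add_comm]; exact hly'.symm)
    rw [smul_sub, this]
    exact L.sub_mem hl' hl
  have : x - k + k ∈ K := K.add_mem (le_of_lt hK hsub) hkK
  simpa using this

/-- A proper ideal `I` is 2-absorbing if `a*b*c ∈ I` implies `a*b ∈ I` or `a*c ∈ I`
or `b*c ∈ I`. -/
def Is2AbsorbingIdeal {R : Type*} [CommRing R] (I : Ideal R) : Prop :=
  I ≠ ⊤ ∧ ∀ a b c : R, a * b * c ∈ I → a * b ∈ I ∨ a * c ∈ I ∨ b * c ∈ I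

theorem colon_2absorbing
    {R M : Type*} [CommRing R] [AddCommGroup M] [Module R M]
    (N : Submodule R M) (hN : Is2AbsorbingSecond N)
    (L : Submodule R M) (hL : IsCompletelyIrreducible L) (hNL : ¬ N ≤ L) :
    Is2AbsorbingIdeal (L.colon N) := by
  constructor
  · intro h
    apply hNL
    intro n hn
    have : (1 : R) ∈ L.colon N := h ▸ trivial
    simpa using Submodule.mem_colon.mp this n hn
  · intro a b c habc
    set Lc := L.comap (LinearMap.lsmul R M c) with hLcdef
    by_cases hc : Lc = ⊤
    · right; right
      apply Submodule.mem_colon.mpr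
      intro n hn
      have hcn : c • n ∈ L := by
        have : n ∈ Lc := hc ▸ trivial
        exact this
      have : (b * c) • n = b • (c • n) := by rw [mul_smul]
      rw [this]
      exact L.smul_mem b hcn
    · have hci := ci_comap_smul L hL c hc
      have hle : a • b • N ≤ Lc := by
        intro x hx
        rw [← SetLike.mem_coe, Submodule.coe_pointwise_smul] at hx
        obtain ⟨y, hy, hax⟩ := Set.mem_smul_set.mp hx
        rw [Submodule.coe_pointwise_smul] at hy
        obtain ⟨n, hn, hbn⟩ := Set.mem_smul_set.mp hy
        show c • x ∈ L
        rw [← hax, ← hbn, smul_smul, smul_smul]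
        have : c * a * b = a * b * c := by ring
        rw [this]
        exact Submodule.mem_colon.mp habc n hn
      rcases hN.2 a b Lc hci hle with h | h | h
      · right; left
        apply Submodule.mem_colon.mpr
        intro n hn
        have : a • n ∈ Lc := h (Submodule.smul_mem_pointwise_smul n a N hn)
        have hcL : c • a • n ∈ L := this
        rw [smul_smul] at hcL
        have : a * c = c * a := mul_comm a c
        rw [this]
        exact hcL
      · right; right
        apply Submodule.mem_colon.mpr
        intro n hn
        have : b • n ∈ Lc := h (Submodule.smul_mem_pointwise_smul n b N hn)
        have hcL : c • b • n ∈ L := this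
        rw [smul_smul] at hcL
        have : b * c = c * b := mul_comm b c
        rw [this]
        exact hcL
      · left
        apply Submodule.mem_colon.mpr
        intro n hn
        have : (a * b) • n = 0 := Submodule.mem_annihilator.mp h n hn
        rw [this]
        exact L.zero_mem
end

section
/- If N is a 2-absorbing second submodule of M and a ∈ R, then aⁿ•N = aⁿ⁺¹•N for all n ≥ 2. -/
open Pointwise

section Aux

variable {R M : Type*} [CommRing R] [AddCommGroup M] [Module R M]

lemma exists_ci (K : Submodule R M) (x : M) (hx : x ∉ K) :
    ∃ L : Submodule R M, IsCompletelyIrreducible L ∧ K ≤ L ∧ x ∉ L := by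
  obtain ⟨L, hKL, hmax⟩ :=
    zorn_le_nonempty₀ {L : Submodule R M | K ≤ L ∧ x ∉ L}
      (fun c hcs hc y hy => by
        refine ⟨sSup c, ⟨le_trans (hcs hy).1 (le_sSup hy), ?_⟩, fun z hz => le_sSup hz⟩
        intro hxm
        rw [Submodule.mem_sSup_of_directed ⟨y, hy⟩ hc.directedOn] at hxm
        obtain ⟨T, hT, hxT⟩ := hxm
        exact (hcs hT).2 hxT) K ⟨le_rfl, hx⟩
  refine ⟨L, ⟨?_, ?_⟩, hmax.1.1, hmax.1.2⟩
  · intro h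
    exact hmax.1.2 (h ▸ Submodule.mem_top)
  · intro S hS
    by_contra hLS
    have hxS : ∀ T ∈ S, x ∈ T := by
      intro T hT
      have hLT : L ≤ T := hS ▸ sInf_le hT
      rcases eq_or_lt_of_le hLT with rfl | hlt
      · exact absurd hT hLS
      · by_contra hxT
        exact absurd (hmax.2 ⟨hmax.1.1.trans hLT, hxT⟩ hLT) (not_le_of_gt hlt)
    have : x ∈ sInf S := Submodule.mem_sInf.2 hxS
    exact hmax.1.2 (hS ▸ this)

lemma le_of_ci {J K : Submodule R M}
    (h : ∀ L : Submodule R M, IsCompletelyIrreducible L → K ≤ L → J ≤ L) : J ≤ K := by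
  intro x hxJ
  by_contra hxK
  obtain ⟨L, hL, hKL, hxL⟩ := exists_ci K x hxK
  exact hxL (h L hL hKL hxJ)

lemma smul_sub_le (a : R) (K : Submodule R M) : a • K ≤ K := by
  intro m hm
  rw [← SetLike.mem_coe, Submodule.coe_pointwise_smul, Set.mem_smul_set] at hm
  obtain ⟨s, hs, rfl⟩ := hm
  exact K.smul_mem a hs

lemma smul_eq_bot_of_mem_ann {r : R} {N : Submodule R M} (h : r ∈ N.annihilator) :
    r • N = ⊥ := by
  rw [eq_bot_iff]
  intro m hm
  rw [← SetLike.mem_coe, Submodule.coe_pointwise_smul, Set.mem_smul_set] at hm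
  obtain ⟨s, hs, rfl⟩ := hm
  simpa using Submodule.mem_annihilator.mp h s hs

lemma smul_mono_right' (a : R) {K L : Submodule R M} (h : K ≤ L) : a • K ≤ a • L := by
  intro m hm
  rw [← SetLike.mem_coe, Submodule.coe_pointwise_smul, Set.mem_smul_set] at hm ⊢
  obtain ⟨s, hs, rfl⟩ := hm
  exact ⟨s, h hs, rfl⟩

end Aux

theorem pow_smul_stabilizes
    {R M : Type*} [CommRing R] [AddCommGroup M] [Module R M]
    (N : Submodule R M) (hN : Is2AbsorbingSecond N) (a : R) :
    ∀ n : ℕ, 2 ≤ n → (a ^ n) • N = (a ^ (n + 1)) • N := by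
  have key : (a ^ 2) • N = (a ^ 3) • N := by
    apply le_antisymm
    · apply le_of_ci
      intro L hL hle
      have h3 : a • ((a ^ 2) • N) ≤ L := by
        rw [smul_smul]
        have : a * a ^ 2 = a ^ 3 := by ring
        rw [this]; exact hle
      have haa : a ^ 2 • N = a • a • N := by rw [smul_smul]; ring_nf
      rcases hN.2 a (a ^ 2) L hL h3 with h | h | h
      · calc (a ^ 2) • N = a • (a • N) := haa
          _ ≤ a • N := smul_sub_le a _
          _ ≤ L := h
      · exact h
      · -- a * a^2 = a^3 ∈ Ann N
        have h30 : (a ^ 3) • N = ⊥ := by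
          apply smul_eq_bot_of_mem_ann
          have : a * a ^ 2 = a ^ 3 := by ring
          rwa [this] at h
        by_cases hcase : ∀ L' : Submodule R M, IsCompletelyIrreducible L' →
            (a ^ 2) • N ≤ L' → a • N ≤ L'
        · have h1 : a • N ≤ (a ^ 2) • N := le_of_ci hcase
          have h2 : (a ^ 2) • N ≤ (a ^ 3) • N := by
            calc (a ^ 2) • N = a • (a • N) := haa
              _ ≤ a • ((a ^ 2) • N) := smul_mono_right' a h1
              _ = (a ^ 3) • N := by rw [smul_smul]; ring_nf
          calc (a ^ 2) • N ≤ (a ^ 3) • N := h2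
            _ = ⊥ := h30
            _ ≤ L := bot_le
        · push_neg at hcase
          obtain ⟨L', hL', hle', hnle⟩ := hcase
          rcases hN.2 a a L' hL' (by rw [← haa]; exact hle') with h' | h' | h'
          · exact absurd h' hnle
          · exact absurd h' hnle
          · have : (a ^ 2) • N = ⊥ := by
              apply smul_eq_bot_of_mem_ann
              have : a * a = a ^ 2 := by ring
              rwa [this] at h'
            rw [this]; exact bot_le
    · have : (a ^ 3) • N = a • ((a ^ 2) • N) := by rw [smul_smul]; ring_nf
      rw [this]; exact smul_sub_le a _
  intro n hn
  obtain ⟨k, rfl⟩ : ∃ k, n = 2 + k := ⟨n - 2, by omega⟩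
  have e1 : a ^ (2 + k) • N = a ^ k • ((a ^ 2) • N) := by
    rw [smul_smul, ← pow_add]; ring_nf
  have e2 : a ^ (2 + k + 1) • N = a ^ k • ((a ^ 3) • N) := by
    rw [smul_smul, ← pow_add]; ring_nf
  rw [e1, e2, key]
end

section
/- If N is a 2-absorbing second submodule of M with Ann_R(N) a prime ideal of R, then (L :_R N) is a prime ideal of R for every completely irreducible submodule L of M with N ⊄ L. -/
open Pointwise

theorem colon_prime_of_ann_prime
    {R M : Type*} [CommRing R] [AddCommGroup M] [Module R M]
    (N : Submodule R M) (hN : Is2AbsorbingSecond N)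
    (hp : N.annihilator.IsPrime) :
    ∀ L : Submodule R M, IsCompletelyIrreducible L → ¬ N ≤ L →
      (L.colon N).IsPrime := by
  intro L hL hNL
  have hsm : ∀ (a : R), a • N ≤ L ↔ a ∈ L.colon N := by
    intro a
    constructor
    · intro h
      rw [Submodule.mem_colon]
      intro n hn
      exact h (Submodule.smul_mem_pointwise_smul n a N hn)
    · intro h x hx
      rcases Set.mem_smul_set.mp (hx : x ∈ a • (N : Set M)) with ⟨n, hn, rfl⟩
      exact Submodule.mem_colon.mp h n hn
  constructor
  · intro h
    apply hNL
    intro n hn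
    have : (1 : R) ∈ L.colon N := h ▸ Submodule.mem_top
    simpa using Submodule.mem_colon.mp this n hn
  · intro a b hab
    have habs : a • b • N ≤ L := by
      intro x hx
      rcases Set.mem_smul_set.mp (hx : x ∈ a • ((b • N : Submodule R M) : Set M)) with ⟨y, hy, rfl⟩
      rcases Set.mem_smul_set.mp (hy : y ∈ b • (N : Set M)) with ⟨n, hn, rfl⟩
      have := Submodule.mem_colon.mp hab n hn
      simpa [mul_smul] using this
    rcases hN.2 a b L hL habs with h | h | h
    · exact Or.inl ((hsm a).mp h)
    · exact Or.inr ((hsm b).mp h)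
    · rcases hp.2 h with ha | hb
      · left
        rw [Submodule.mem_colon]
        intro n hn
        have : a • n = 0 := Submodule.mem_annihilator.mp ha n hn
        simp [this]
      · right
        rw [Submodule.mem_colon]
        intro n hn
        have : b • n = 0 := Submodule.mem_annihilator.mp hb n hn
        simp [this]
end

section
/- If N is a 2-absorbing second submodule of M, √(Ann_R(N)) = P for a prime ideal P of R, and L is a completely irreducible submodule of M with N ⊄ L, then √((L :_R N)) is a prime ideal of R containing P. -/
open Pointwise

lemma smul_le_iff_mem_colon {R M : Type*} [CommRing R] [AddCommGroup M] [Module R M]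
    (L N : Submodule R M) (r : R) : r • N ≤ L ↔ r ∈ L.colon N := by
  rw [Submodule.mem_colon]
  constructor
  · intro h n hn; exact h (Submodule.smul_mem_pointwise_smul n r N hn)
  · intro h m hm
    obtain ⟨n, hn, rfl⟩ := Set.mem_smul_set.mp hm
    exact h n hn

theorem radical_colon_prime
    {R M : Type*} [CommRing R] [AddCommGroup M] [Module R M]
    (N : Submodule R M) (hN : Is2AbsorbingSecond N) (P : Ideal R) (hP : P.IsPrime)
    (hrad : N.annihilator.radical = P)
    (L : Submodule R M) (hL : IsCompletelyIrreducible L) (hNL : ¬ N ≤ L) :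
    (L.colon N).radical.IsPrime ∧ P ≤ (L.colon N).radical := by
  have hann : N.annihilator ≤ L.colon N := by
    intro a ha
    rw [Submodule.mem_colon]
    intro n hn
    rw [Submodule.mem_annihilator] at ha
    rw [ha n hn]
    exact L.zero_mem
  have hPle : P ≤ (L.colon N).radical := by
    rw [← hrad]; exact Ideal.radical_mono hann
  refine ⟨⟨?_, ?_⟩, hPle⟩
  · intro h
    rw [Ideal.radical_eq_top] at h
    apply hNL
    intro n hn
    have : (1 : R) ∈ L.colon N := h ▸ Submodule.mem_top
    simpa using Submodule.mem_colon.mp this n hn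
  · intro a b hab
    obtain ⟨n, hn⟩ := hab
    rw [mul_pow] at hn
    have hle : a ^ n • b ^ n • N ≤ L := by
      rw [← mul_smul, smul_le_iff_mem_colon]
      exact hn
    rcases hN.2 (a ^ n) (b ^ n) L hL hle with h | h | h
    · exact Or.inl ⟨n, (smul_le_iff_mem_colon L N _).mp h⟩
    · exact Or.inr ⟨n, (smul_le_iff_mem_colon L N _).mp h⟩
    · rw [← mul_pow] at h
      have : a * b ∈ P := hrad ▸ ⟨n, h⟩
      rcases hP.mem_or_mem this with h' | h'
      · exact Or.inl (hPle h')
      · exact Or.inr (hPle h')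
end

section
/- The union of a nonempty chain of 2-absorbing second submodules of an R-module M is a 2-absorbing second submodule of M. -/
open Pointwise

private lemma smul_mono_aux {R M : Type*} [CommRing R] [AddCommGroup M] [Module R M]
    (a : R) {N P : Submodule R M} (h : N ≤ P) : a • N ≤ a • P := by
  intro x hx
  obtain ⟨y, hy, rfl⟩ := Set.mem_smul_set.mp hx
  exact Set.smul_mem_smul_set (h hy)

theorem chain_union_2absorbing_second
    {R M : Type*} [CommRing R] [AddCommGroup M] [Module R M]
    (C : Set (Submodule R M)) (hne : C.Nonempty) (hchain : IsChain (· ≤ ·) C)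
    (h : ∀ K ∈ C, Is2AbsorbingSecond K) :
    Is2AbsorbingSecond (sSup C) := by
  have hdir : DirectedOn (· ≤ ·) C := hchain.directedOn
  have hmem : ∀ {z : M}, z ∈ sSup C ↔ ∃ K ∈ C, z ∈ K := fun {z} =>
    Submodule.mem_sSup_of_directed hne hdir
  constructor
  · obtain ⟨K, hK⟩ := hne
    intro hbot
    exact (h K hK).1 (le_bot_iff.mp (hbot ▸ le_sSup hK))
  · intro a b L hL hab
    by_contra hcon
    push_neg at hcon
    obtain ⟨h1, h2, h3⟩ := hcon
    -- find K1 ∈ C with ¬ a • K1 ≤ L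
    rw [SetLike.not_le_iff_exists] at h1 h2
    obtain ⟨x, hx, hxL⟩ := h1
    obtain ⟨y, hy, rfl⟩ := Set.mem_smul_set.mp hx
    obtain ⟨K1, hK1C, hyK1⟩ := hmem.mp hy
    obtain ⟨x2, hx2, hx2L⟩ := h2
    obtain ⟨y2, hy2, rfl⟩ := Set.mem_smul_set.mp hx2
    obtain ⟨K2, hK2C, hy2K2⟩ := hmem.mp hy2
    rw [Submodule.mem_annihilator] at h3
    push_neg at h3
    obtain ⟨z, hz, hz0⟩ := h3
    obtain ⟨K3, hK3C, hzK3⟩ := hmem.mp hz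
    -- take the maximum of K1, K2, K3
    obtain ⟨K12, hK12C, hle1, hle2⟩ := hdir K1 hK1C K2 hK2C
    obtain ⟨K, hKC, hle12, hle3⟩ := hdir K12 hK12C K3 hK3C
    have habK : a • b • K ≤ L :=
      le_trans (smul_mono_aux a (smul_mono_aux b (le_sSup hKC))) hab
    rcases (h K hKC).2 a b L hL habK with hc | hc | hc
    · exact hxL (hc (Set.smul_mem_smul_set (hle12 (hle1 hyK1))))
    · exact hx2L (hc (Set.smul_mem_smul_set (hle12 (hle2 hy2K2))))
    · rw [Submodule.mem_annihilator] at hc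
      exact hz0 (hc z (hle3 hzK3))
end

section
/- A nonzero submodule N of M is strongly 2-absorbing second if and only if for all a, b ∈ R one has a•b•N = a•N or a•b•N = b•N or a•b•N = 0. -/
open Pointwise

/-- A nonzero submodule `N` is strongly 2-absorbing second if whenever `a b : R` and
`L₁, L₂` are completely irreducible submodules with `a • b • N ⊆ L₁ ∩ L₂`, then
`a • N ⊆ L₁ ∩ L₂` or `b • N ⊆ L₁ ∩ L₂` or `a * b ∈ Ann(N)`. -/
def IsStrongly2AbsorbingSecond {R M : Type*} [CommRing R] [AddCommGroup M] [Module R M]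
    (N : Submodule R M) : Prop :=
  N ≠ ⊥ ∧ ∀ (a b : R) (L₁ L₂ : Submodule R M), IsCompletelyIrreducible L₁ →
    IsCompletelyIrreducible L₂ → a • b • N ≤ L₁ ⊓ L₂ →
    a • N ≤ L₁ ⊓ L₂ ∨ b • N ≤ L₁ ⊓ L₂ ∨ a * b ∈ N.annihilator

lemma exists_ci_s10 {R M : Type*} [CommRing R] [AddCommGroup M] [Module R M]
    (B : Submodule R M) (m : M) (hm : m ∉ B) :
    ∃ L : Submodule R M, IsCompletelyIrreducible L ∧ B ≤ L ∧ m ∉ L := by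
  have ih : ∀ c ⊆ {P : Submodule R M | m ∉ P}, IsChain (· ≤ ·) c → ∀ y ∈ c,
      ∃ ub ∈ {P : Submodule R M | m ∉ P}, ∀ z ∈ c, z ≤ ub := by
    intro c hc hchain y hy
    refine ⟨sSup c, ?_, fun z hz => le_sSup hz⟩
    intro hmem
    obtain ⟨K, hK, hmK⟩ :=
      (Submodule.mem_sSup_of_directed ⟨y, hy⟩ (hchain.directedOn)).1 hmem
    exact hc hK hmK
  obtain ⟨L, hBL, hLmax⟩ := zorn_le_nonempty₀ {P : Submodule R M | m ∉ P} ih B hm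
  have hLmem : m ∉ L := hLmax.prop
  refine ⟨L, ⟨?_, ?_⟩, hBL, hLmem⟩
  · rintro rfl; exact hLmem trivial
  · intro S hS
    by_contra hLS
    have : m ∈ sInf S := by
      refine Submodule.mem_sInf.2 fun K hK => ?_
      have hLK : L ≤ K := hS ▸ sInf_le hK
      have hne : L ≠ K := fun h => hLS (h ▸ hK)
      by_contra hmK
      exact hne (le_antisymm hLK (hLmax.2 hmK hLK))
    exact hLmem (hS ▸ this)

lemma smul_eq_bot_iff_mem_ann {R M : Type*} [CommRing R] [AddCommGroup M] [Module R M]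
    (r : R) (N : Submodule R M) : r • N = ⊥ ↔ r ∈ N.annihilator := by
  constructor
  · intro h
    refine Submodule.mem_annihilator.2 fun n hn => ?_
    have : r • n ∈ r • N := Submodule.smul_mem_pointwise_smul n r N hn
    rw [h] at this
    simpa using this
  · intro h
    rw [eq_bot_iff]
    intro x hx
    obtain ⟨y, hy, rfl⟩ := Set.mem_smul_set.1 hx
    simpa using Submodule.mem_annihilator.1 h y hy

theorem strongly2AbsorbingSecond_iff_smul_eq'
    {R M : Type*} [CommRing R] [AddCommGroup M] [Module R M]
    (N : Submodule R M) (hne : N ≠ ⊥) :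
    (N ≠ ⊥ ∧ ∀ (a b : R) (L₁ L₂ : Submodule R M), IsCompletelyIrreducible L₁ →
    IsCompletelyIrreducible L₂ → a • b • N ≤ L₁ ⊓ L₂ →
    a • N ≤ L₁ ⊓ L₂ ∨ b • N ≤ L₁ ⊓ L₂ ∨ a * b ∈ N.annihilator) ↔
      ∀ a b : R, a • b • N = a • N ∨ a • b • N = b • N ∨ a • b • N = ⊥ := by
  constructor
  · rintro ⟨-, h⟩ a b
    by_cases h1 : a • b • N = a • N
    · exact Or.inl h1
    by_cases h2 : a • b • N = b • N
    · exact Or.inr (Or.inl h2)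
    refine Or.inr (Or.inr ?_)
    have hab_a : a • b • N ≤ a • N :=
      Submodule.map_mono (Submodule.smul_le_self_of_tower b N)
    have hab_b : a • b • N ≤ b • N := by
      rw [← mul_smul, mul_comm, mul_smul]
      exact Submodule.map_mono (Submodule.smul_le_self_of_tower a N)
    have hx : ¬ a • N ≤ a • b • N := fun hle => h1 (le_antisymm hab_a hle)
    have hy : ¬ b • N ≤ a • b • N := fun hle => h2 (le_antisymm hab_b hle)
    obtain ⟨x, hxA, hxB⟩ := SetLike.not_le_iff_exists.1 hx
    obtain ⟨y, hyA, hyB⟩ := SetLike.not_le_iff_exists.1 hy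
    obtain ⟨L₁, hL₁, hab₁, hx₁⟩ := exists_ci_s10 (a • b • N) x hxB
    obtain ⟨L₂, hL₂, hab₂, hy₂⟩ := exists_ci_s10 (a • b • N) y hyB
    rcases h a b L₁ L₂ hL₁ hL₂ (le_inf hab₁ hab₂) with h' | h' | h'
    · exact absurd ((h'.trans inf_le_left) hxA) hx₁
    · exact absurd ((h'.trans inf_le_right) hyA) hy₂
    · rw [← mul_smul]
      exact (smul_eq_bot_iff_mem_ann _ N).2 h'
  · intro h
    refine ⟨hne, fun a b L₁ L₂ _ _ hle => ?_⟩
    rcases h a b with h' | h' | h'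
    · exact Or.inl (h' ▸ hle)
    · exact Or.inr (Or.inl (h' ▸ hle))
    · refine Or.inr (Or.inr ?_)
      rw [← mul_smul] at h'
      exact (smul_eq_bot_iff_mem_ann _ N).1 h'


theorem strongly2AbsorbingSecond_iff_smul_eq
    {R M : Type*} [CommRing R] [AddCommGroup M] [Module R M]
    (N : Submodule R M) (hne : N ≠ ⊥) :
    IsStrongly2AbsorbingSecond N ↔
      ∀ a b : R, a • b • N = a • N ∨ a • b • N = b • N ∨ a • b • N = ⊥ := by
  exact strongly2AbsorbingSecond_iff_smul_eq' N hne
end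

section
/- Let M be a multiplication R-module and N a submodule such that (N :_R M) is a 2-absorbing ideal of R. Then N is a 2-absorbing submodule of M, i.e., whenever a, b ∈ R and m ∈ M with a•b•m ∈ N, then a•m ∈ N or b•m ∈ N or a•b ∈ (N :_R M). -/
open Pointwise

/-- An `R`-module `M` is a multiplication module if every submodule equals `I • M`
for some ideal `I`. -/
def IsMultiplicationModule (R M : Type*) [CommRing R] [AddCommGroup M] [Module R M] : Prop :=
  ∀ N : Submodule R M, ∃ I : Ideal R, N = I • (⊤ : Submodule R M)

theorem twoAbsorbing_submodule_of_colon_twoAbsorbing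
    {R M : Type*} [CommRing R] [AddCommGroup M] [Module R M]
    (hM : IsMultiplicationModule R M) (N : Submodule R M)
    (h : Is2AbsorbingIdeal (N.colon ⊤)) :
    ∀ (a b : R) (m : M), a • b • m ∈ N →
      a • m ∈ N ∨ b • m ∈ N ∨ a * b ∈ N.colon ⊤ := by
  intro a b m habm
  obtain ⟨I, hI⟩ := hM (Submodule.span R {m})
  set J := N.colon (⊤ : Submodule R M) with hJdef
  have hmemJ : ∀ r : R, r ∈ J ↔ ∀ x : M, r • x ∈ N := by
    intro r
    rw [hJdef, Submodule.mem_colon]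
    exact ⟨fun hh x => hh x trivial, fun hh x _ => hh x⟩
  -- a*b*I ⊆ J
  have habI : ∀ c ∈ I, a * b * c ∈ J := by
    intro c hc
    rw [hmemJ]
    intro x
    have hcx : c • x ∈ Submodule.span R {m} := by
      rw [hI]; exact Submodule.smul_mem_smul hc trivial
    obtain ⟨r, hr⟩ := Submodule.mem_span_singleton.mp hcx
    have heq : (a * b * c) • x = r • (a • b • m) := by
      rw [mul_smul, ← hr, mul_smul, smul_comm b r, smul_comm a r]
    rw [heq]
    exact N.smul_mem r habm
  by_cases hab : a * b ∈ J
  · exact Or.inr (Or.inr hab)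
  have key : (∀ c ∈ I, a * c ∈ J) ∨ (∀ c ∈ I, b * c ∈ J) := by
    by_contra hcon
    push_neg at hcon
    obtain ⟨⟨c, hc, hac⟩, ⟨d, hd, hbd⟩⟩ := hcon
    have hbc : b * c ∈ J := by
      rcases h.2 a b c (habI c hc) with h1 | h2 | h3
      · exact absurd h1 hab
      · exact absurd h2 hac
      · exact h3
    have had : a * d ∈ J := by
      rcases h.2 a b d (habI d hd) with h1 | h2 | h3
      · exact absurd h1 hab
      · exact h2
      · exact absurd h3 hbd
    rcases h.2 a b (c + d) (habI (c + d) (I.add_mem hc hd)) with h1 | h2 | h3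
    · exact hab h1
    · have : a * c = a * (c + d) - a * d := by ring
      exact hac (this ▸ J.sub_mem h2 had)
    · have : b * d = b * (c + d) - b * c := by ring
      exact hbd (this ▸ J.sub_mem h3 hbc)
  have hmI : m ∈ I • (⊤ : Submodule R M) := by
    rw [← hI]; exact Submodule.mem_span_singleton_self m
  rcases key with hk | hk
  · left
    refine Submodule.smul_induction_on hmI (fun r hr x _ => ?_) (fun x y hx hy => ?_)
    · rw [smul_smul]
      exact (hmemJ (a * r)).mp (hk r hr) x
    · rw [smul_add]; exact N.add_mem hx hy
  · right; left
    refine Submodule.smul_induction_on hmI (fun r hr x _ => ?_) (fun x y hx hy => ?_)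
    · rw [smul_smul]
      exact (hmemJ (b * r)).mp (hk r hr) x
    · rw [smul_add]; exact N.add_mem hx hy
end
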